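/- Let U be a finite universe, F a finite multiset of subsets of U, and s, d, t natural numbers. For each N ⊆ U let F_N be the sub-multiset of copies of N in F, and let C be the set of all covers c = {N_1,…,N_b} with b ≤ t, N_i ⊆ U, and ∪ N_i = U. Then the following are equivalent: (1) for every sub-multiset S ⊆ F with |S| ≤ s there exist pairwise disjoint sub-multisets T_1,…,T_d of F \ S, each of cardinality at most t, with ∪_{X∈T_i} X = U for each i; (2) for every integer assignment (z_N)_{N⊆U} with 0 ≤ z_N ≤ |F_N| and Σ_N z_N ≤ s, there exists an integer assignment (x_c)_{c∈C} with 0 ≤ x_c ≤ d, Σ_c x_c ≥ d, and for every N ⊆ U, Σ_{c∈C, N∈c} x_c ≤ |F_N| − z_N. -/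

import Mathlib

/-- The Resiliency Disjoint Set Cover Problem: for every sub-multiset `S ⊆ F` with
`|S| ≤ s` there exist `d` pairwise disjoint sub-multisets of `F \ S`, each of
cardinality at most `t`, each covering the universe. -/
def RDSCP {α : Type*} [Fintype α] [DecidableEq α]
    (F : Multiset (Finset α)) (s d t : ℕ) : Prop :=
  ∀ S : Multiset (Finset α), S ≤ F → Multiset.card S ≤ s →
    ∃ T : Fin d → Multiset (Finset α),
      (∑ i, T i) ≤ F - S ∧
      ∀ i, Multiset.card (T i) ≤ t ∧ ∀ a : α, ∃ X ∈ T i, a ∈ X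

/-- The set `𝒞` of all covers `c = {N₁,…,N_b}` with `b ≤ t` and `∪ Nᵢ = U`. -/
def coversOf (α : Type*) [Fintype α] [DecidableEq α] (t : ℕ) : Finset (Finset (Finset α)) :=
  Finset.univ.filter (fun c : Finset (Finset α) => c.card ≤ t ∧ ∀ a : α, ∃ N ∈ c, a ∈ N)

private lemma card_finset_sum {β γ : Type*} (s : Finset β) (f : β → Multiset γ) :
    Multiset.card (∑ c ∈ s, f c) = ∑ c ∈ s, Multiset.card (f c) := by
  induction s using Finset.cons_induction with
  | empty => simp
  | cons a s ha ih => simp [Finset.sum_cons, ih]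

private lemma map_finset_sum' {β γ δ : Type*} (s : Finset β) (f : β → Multiset γ) (g : γ → δ) :
    Multiset.map g (∑ c ∈ s, f c) = ∑ c ∈ s, (f c).map g := by
  induction s using Finset.cons_induction with
  | empty => simp
  | cons a s ha ih => simp [Finset.sum_cons, ih]

private lemma msum_finset_sum {β : Type*} (s : Finset β) (f : β → Multiset ℕ) :
    (∑ c ∈ s, f c).sum = ∑ c ∈ s, (f c).sum := by
  induction s using Finset.cons_induction with
  | empty => simp
  | cons a s ha ih => simp [Finset.sum_cons, ih]

private lemma sum_fin_get {β M : Type*} [AddCommMonoid M] (L : List β) (g : β → M) :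
    ∑ i : Fin L.length, g (L.get i) = (L.map g).sum := by
  induction L with
  | nil => simp
  | cons a l ih => simp [Fin.sum_univ_succ, ih]

private lemma count_eq_ite {α : Type*} [DecidableEq α] (c : Finset α) (N : α) :
    Multiset.count N c.val = if N ∈ c then 1 else 0 := by
  split
  · exact Multiset.count_eq_one_of_mem c.nodup ‹_›
  · exact Multiset.count_eq_zero_of_notMem ‹_›

theorem stmt4' {α : Type*} [Fintype α] [DecidableEq α]
    (F : Multiset (Finset α)) (s d t : ℕ) :
    (∀ S : Multiset (Finset α), S ≤ F → Multiset.card S ≤ s →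
    ∃ T : Fin d → Multiset (Finset α),
      (∑ i, T i) ≤ F - S ∧
      ∀ i, Multiset.card (T i) ≤ t ∧ ∀ a : α, ∃ X ∈ T i, a ∈ X) ↔
      ∀ z : Finset α → ℕ,
        (∀ N : Finset α, z N ≤ F.count N) →
        (∑ N : Finset α, z N) ≤ s →
        ∃ x : Finset (Finset α) → ℕ,
          (∀ c : Finset (Finset α), x c ≤ d) ∧
          d ≤ (∑ c ∈ coversOf α t, x c) ∧
          ∀ N : Finset α, (∑ c ∈ (coversOf α t).filter (fun c => N ∈ c), x c) ≤ F.count N - z N := by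
  constructor
  · intro h z hz hzs
    set S : Multiset (Finset α) := ∑ N : Finset α, Multiset.replicate (z N) N with hS
    have hScount : ∀ N, S.count N = z N := by
      intro N
      rw [hS, Multiset.count_sum']
      simp [Multiset.count_replicate]
    have hSle : S ≤ F := Multiset.le_iff_count.mpr (fun N => (hScount N) ▸ hz N)
    have hScard : Multiset.card S ≤ s := by
      have : Multiset.card S = ∑ N : Finset α, z N := by
        rw [hS, card_finset_sum]
        simp
      omega
    obtain ⟨T, hTle, hT⟩ := h S hSle hScard
    have hmem : ∀ i, (T i).toFinset ∈ coversOf α t := by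
      intro i
      simp only [coversOf, Finset.mem_filter, Finset.mem_univ, true_and]
      refine ⟨le_trans (Multiset.toFinset_card_le _) (hT i).1, fun a => ?_⟩
      obtain ⟨X, hX, haX⟩ := (hT i).2 a
      exact ⟨X, Multiset.mem_toFinset.mpr hX, haX⟩
    refine ⟨fun c => (Finset.univ.filter (fun i : Fin d => (T i).toFinset = c)).card, ?_, ?_, ?_⟩
    · intro c
      exact le_trans (Finset.card_filter_le _ _) (by simp)
    · have := Finset.card_eq_sum_card_fiberwise (fun i (_ : i ∈ Finset.univ) => hmem i)
      simp only [Finset.card_univ, Fintype.card_fin] at this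
      exact this.le
    · intro N
      set s' : Finset (Fin d) := Finset.univ.filter (fun i => N ∈ (T i).toFinset) with hs'
      have key : (∑ c ∈ (coversOf α t).filter (fun c => N ∈ c),
          (Finset.univ.filter (fun i : Fin d => (T i).toFinset = c)).card) = s'.card := by
        rw [Finset.card_eq_sum_card_fiberwise
          (s := s') (f := fun i => (T i).toFinset) (t := (coversOf α t).filter (fun c => N ∈ c))
          (fun i hi => by
            simp only [hs', Finset.mem_filter, Finset.mem_coe, Finset.coe_filter] at hi
            exact Finset.mem_filter.mpr ⟨hmem i, by simpa using hi⟩)]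
        refine Finset.sum_congr rfl (fun c hc => ?_)
        congr 1
        ext i
        simp only [Finset.mem_filter, Finset.mem_univ, true_and, hs']
        constructor
        · intro hic
          refine ⟨?_, hic⟩
          rw [hic]
          exact (Finset.mem_filter.mp hc).2
        · exact fun h => h.2
      rw [key]
      have h1 : s'.card ≤ ∑ i : Fin d, Multiset.count N (T i) := by
        rw [Finset.card_eq_sum_ones]
        refine le_trans (Finset.sum_le_sum (fun i hi => ?_))
          (Finset.sum_le_sum_of_subset (Finset.subset_univ s'))
        simp only [hs', Finset.mem_filter, Multiset.mem_toFinset] at hi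
        exact Multiset.one_le_count_iff_mem.mpr hi.2
      have h2 : ∑ i : Fin d, Multiset.count N (T i) ≤ F.count N - z N := by
        rw [← Multiset.count_sum']
        have := Multiset.le_iff_count.mp hTle N
        rwa [Multiset.count_sub, hScount] at this
      omega
  · intro h S hSle hScard
    set z : Finset α → ℕ := fun N => S.count N with hz
    obtain ⟨x, hxd, hdx, hxc⟩ := h z
      (fun N => Multiset.le_iff_count.mp hSle N)
      (by
        have : ∑ N : Finset α, z N = Multiset.card S := by
          rw [← Multiset.toFinset_sum_count_eq S]
          exact (Finset.sum_subset (Finset.subset_univ _)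
            (fun N _ hN => Multiset.count_eq_zero_of_notMem
              (fun h => hN (Multiset.mem_toFinset.mpr h)))).symm
        omega)
    set M : Multiset (Finset (Finset α)) :=
      ∑ c ∈ coversOf α t, Multiset.replicate (x c) c with hM
    have hMcard : d ≤ Multiset.card M := by
      rw [hM, card_finset_sum]
      simpa using hdx
    set L : List (Finset (Finset α)) := M.toList.take d with hL
    have hlen : L.length = d := by
      rw [hL, List.length_take, Multiset.length_toList]
      omega
    have hLmem : ∀ c ∈ L, c ∈ coversOf α t := by
      intro c hc
      have : c ∈ M := Multiset.mem_toList.mp ((M.toList.take_sublist d).mem hc)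
      rw [hM] at this
      obtain ⟨c', hc', hcc'⟩ := Multiset.mem_sum.mp this
      rwa [Multiset.eq_of_mem_replicate hcc']
    refine ⟨fun i => (L.get (finCongr hlen.symm i)).val, ?_, ?_⟩
    · rw [Multiset.le_iff_count]
      intro N
      rw [Multiset.count_sum']
      have e1 : ∑ i : Fin d, Multiset.count N (L.get (finCongr hlen.symm i)).val
          = (L.map (fun c => Multiset.count N c.val)).sum := by
        rw [← sum_fin_get L (fun c => Multiset.count N c.val)]
        exact Fintype.sum_equiv (finCongr hlen.symm) _ _ (fun i => rfl)
      rw [e1]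
      have e2 : (L.map (fun c => Multiset.count N c.val)).sum
          ≤ (M.toList.map (fun c => Multiset.count N c.val)).sum :=
        List.Sublist.sum_le_sum ((M.toList.take_sublist d).map _) (fun a _ => Nat.zero_le a)
      have e3 : (M.toList.map (fun c => Multiset.count N c.val)).sum
          = (M.map (fun c => Multiset.count N c.val)).sum := by
        rw [← Multiset.coe_toList M, Multiset.map_coe, Multiset.sum_coe, Multiset.coe_toList]
      have e4 : (M.map (fun c => Multiset.count N c.val)).sum
          = ∑ c ∈ coversOf α t, x c * (if N ∈ c then 1 else 0) := by
        rw [hM, map_finset_sum', msum_finset_sum]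
        refine Finset.sum_congr rfl (fun c _ => ?_)
        simp [Multiset.map_replicate, Multiset.sum_replicate, count_eq_ite, mul_comm]
      have e5 : ∑ c ∈ coversOf α t, x c * (if N ∈ c then 1 else 0)
          = ∑ c ∈ (coversOf α t).filter (fun c => N ∈ c), x c := by
        rw [Finset.sum_filter]
        refine Finset.sum_congr rfl (fun c _ => ?_)
        split <;> simp
      have e6 := hxc N
      have e7 : F.count N - z N = Multiset.count N (F - S) := by
        rw [Multiset.count_sub]
      omega
    · intro i
      have hmem := hLmem _ (L.get_mem (finCongr hlen.symm i))
      simp only [coversOf, Finset.mem_filter, Finset.mem_univ, true_and] at hmem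
      exact ⟨by simpa using hmem.1, fun a => hmem.2 a⟩


/-- Lemma 1 (correctness of the ILP encoding of RDSCP): the RDSCP instance is
positive iff the ILP `𝓛` is `z`-resilient. -/
theorem stmt4 {α : Type*} [Fintype α] [DecidableEq α]
    (F : Multiset (Finset α)) (s d t : ℕ) :
    RDSCP F s d t ↔
      ∀ z : Finset α → ℕ,
        (∀ N : Finset α, z N ≤ F.count N) →
        (∑ N : Finset α, z N) ≤ s →
        ∃ x : Finset (Finset α) → ℕ,
          (∀ c : Finset (Finset α), x c ≤ d) ∧
          d ≤ (∑ c ∈ coversOf α t, x c) ∧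
          ∀ N : Finset α, (∑ c ∈ (coversOf α t).filter (fun c => N ∈ c), x c) ≤ F.count N - z N := by
  exact stmt4' F s d t
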